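/- arXiv:2605.09585 — 2 statements merged into one kernel-verified Lean document; each statement's English description precedes it below -/
import Mathlib

section
/- Let α : ℂ² → ℂ be entire and suppose (∂α/∂z₂)·exp(2α) = −∂α/∂z₁ everywhere, with α a polynomial (in two complex variables). Then ∂α/∂z₂ ≡ 0 and ∂α/∂z₁ ≡ 0, i.e., α is constant. -/
open Complex MvPolynomial

noncomputable def Dmap (p : MvPolynomial (Fin 2) ℂ) (z : Fin 2 → ℂ) : (Fin 2 → ℂ) →L[ℂ] ℂ :=
  ∑ i : Fin 2, MvPolynomial.eval z (pderiv i p) • ContinuousLinearMap.proj i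

lemma Dmap_apply (p : MvPolynomial (Fin 2) ℂ) (z v : Fin 2 → ℂ) :
    Dmap p z v = MvPolynomial.eval z (pderiv 0 p) * v 0 + MvPolynomial.eval z (pderiv 1 p) * v 1 := by
  simp [Dmap, Fin.sum_univ_two]

lemma hasFDerivAt_eval (p : MvPolynomial (Fin 2) ℂ) (z : Fin 2 → ℂ) :
    HasFDerivAt (fun z => MvPolynomial.eval z p) (Dmap p z) z := by
  induction p using MvPolynomial.induction_on with
  | C a =>
      have : Dmap (C a) z = 0 := by
        ext v; simp [Dmap_apply]
      rw [this]
      simpa using hasFDerivAt_const (a : ℂ) z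
  | add p q hp hq =>
      have h := hp.add hq
      have he : Dmap (p + q) z = Dmap p z + Dmap q z := by
        ext v; simp [Dmap_apply]; ring
      rw [he]
      exact h.congr_of_eventuallyEq (Filter.Eventually.of_forall fun x => by simp)
  | mul_X p j hp =>
      have hj : HasFDerivAt (fun z : Fin 2 → ℂ => z j) (ContinuousLinearMap.proj j : (Fin 2 → ℂ) →L[ℂ] ℂ) z :=
        by exact hasFDerivAt_apply j z
      have h := hp.mul hj
      have he : Dmap (p * X j) z =
          MvPolynomial.eval z p • ContinuousLinearMap.proj j + z j • Dmap p z := by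
        ext v
        fin_cases j <;>
          simp [Dmap_apply, pderiv_mul, Pi.single_apply] <;> ring
      rw [he]
      exact h.congr_of_eventuallyEq (Filter.Eventually.of_forall fun x => by simp)

lemma fderiv_eval (p : MvPolynomial (Fin 2) ℂ) (z : Fin 2 → ℂ) :
    fderiv ℂ (fun z => MvPolynomial.eval z p) z = Dmap p z :=
  (hasFDerivAt_eval p z).fderiv

lemma Dmap_single (p : MvPolynomial (Fin 2) ℂ) (z : Fin 2 → ℂ) (k : Fin 2) :
    Dmap p z (Pi.single k 1) = MvPolynomial.eval z (pderiv k p) := by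
  fin_cases k <;> simp [Dmap_apply]

lemma keydeg (f g : Polynomial ℂ) (hf : f ≠ 0) (hg : g ≠ 0)
    (h : 2*f^2*g + f * Polynomial.derivative g = Polynomial.derivative f * g) : False := by
  have h2f2 : (2:Polynomial ℂ)*f^2 ≠ 0 := mul_ne_zero two_ne_zero (pow_ne_zero 2 hf)
  have hL : (2:Polynomial ℂ)*f^2*g ≠ 0 := mul_ne_zero h2f2 hg
  have h2 : 2*f^2*g = Polynomial.derivative f * g - f * Polynomial.derivative g := by
    linear_combination h
  have hnL : (2*f^2*g).natDegree = 2 * f.natDegree + g.natDegree := by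
    rw [Polynomial.natDegree_mul h2f2 hg, Polynomial.natDegree_mul two_ne_zero
      (pow_ne_zero 2 hf), Polynomial.natDegree_pow]
    simp [two_mul]
  by_cases hf' : Polynomial.derivative f = 0 <;> by_cases hg' : Polynomial.derivative g = 0
  · rw [hf', hg'] at h2; simp at h2
    rcases h2 with h0 | h0
    exacts [hf h0, hg h0]
  · have hg0 : g.natDegree ≠ 0 := fun h0 => hg' (by
      rw [Polynomial.eq_C_of_natDegree_eq_zero h0]; simp)
    have hlt := Polynomial.natDegree_derivative_lt hg0
    rw [hf'] at h2
    have : (2*f^2*g).natDegree = (f * Polynomial.derivative g).natDegree := by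
      rw [h2]; rw [zero_mul, zero_sub, Polynomial.natDegree_neg]
    rw [hnL, Polynomial.natDegree_mul hf hg'] at this
    omega
  · have hf0 : f.natDegree ≠ 0 := fun h0 => hf' (by
      rw [Polynomial.eq_C_of_natDegree_eq_zero h0]; simp)
    have hlt := Polynomial.natDegree_derivative_lt hf0
    rw [hg'] at h2
    have : (2*f^2*g).natDegree = (Polynomial.derivative f * g).natDegree := by
      rw [h2]; rw [mul_zero, sub_zero]
    rw [hnL, Polynomial.natDegree_mul hf' hg] at this
    omega
  · have hf0 : f.natDegree ≠ 0 := fun h0 => hf' (by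
      rw [Polynomial.eq_C_of_natDegree_eq_zero h0]; simp)
    have hg0 : g.natDegree ≠ 0 := fun h0 => hg' (by
      rw [Polynomial.eq_C_of_natDegree_eq_zero h0]; simp)
    have hltf := Polynomial.natDegree_derivative_lt hf0
    have hltg := Polynomial.natDegree_derivative_lt hg0
    have hle := Polynomial.natDegree_sub_le (Polynomial.derivative f * g)
      (f * Polynomial.derivative g)
    rw [← h2, hnL, Polynomial.natDegree_mul hf' hg, Polynomial.natDegree_mul hf hg'] at hle
    omega

noncomputable def Phi (w : ℂ) : MvPolynomial (Fin 2) ℂ →ₐ[ℂ] Polynomial ℂ :=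
  MvPolynomial.aeval (fun i => if i = 0 then Polynomial.X else Polynomial.C w)

lemma eval_Phi (w s : ℂ) (q : MvPolynomial (Fin 2) ℂ) :
    Polynomial.eval s (Phi w q) =
      MvPolynomial.eval (fun i => if i = 0 then s else w) q := by
  induction q using MvPolynomial.induction_on with
  | C a => simp [Phi]
  | add p q hp hq => simp [map_add, hp, hq]
  | mul_X p j hp =>
      rw [map_mul, Polynomial.eval_mul, hp]
      simp only [Phi, MvPolynomial.aeval_X]
      fin_cases j <;> simp

lemma deriv_Phi (w : ℂ) (q : MvPolynomial (Fin 2) ℂ) :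
    Polynomial.derivative (Phi w q) = Phi w (pderiv 0 q) := by
  induction q using MvPolynomial.induction_on with
  | C a => simp [Phi, pderiv_C]
  | add p q hp hq => simp [map_add, hp, hq]
  | mul_X p j hp =>
      rw [pderiv_mul, map_mul, Polynomial.derivative_mul, hp, map_add, map_mul, map_mul]
      simp only [Phi, MvPolynomial.aeval_X]
      fin_cases j <;> simp [Pi.single_apply]

theorem stmt13 (α : (Fin 2 → ℂ) → ℂ)
    (hpoly : ∃ p : MvPolynomial (Fin 2) ℂ, ∀ z, α z = MvPolynomial.eval z p)
    (heq : ∀ z, fderiv ℂ α z (Pi.single 1 1) * Complex.exp (2 * α z) =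
      -(fderiv ℂ α z (Pi.single 0 1))) :
    (∀ z, fderiv ℂ α z (Pi.single 1 1) = 0) ∧
    (∀ z, fderiv ℂ α z (Pi.single 0 1) = 0) ∧
    (∃ c : ℂ, ∀ z, α z = c) := by
  obtain ⟨p, hp⟩ := hpoly
  have hα : α = fun z => MvPolynomial.eval z p := funext hp
  subst hα
  have hfder : ∀ (z : Fin 2 → ℂ) (k : Fin 2),
      fderiv ℂ (fun z => MvPolynomial.eval z p) z (Pi.single k 1)
        = MvPolynomial.eval z (pderiv k p) := by
    intro z k
    rw [fderiv_eval]
    exact Dmap_single p z k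
  have H1 : ∀ z, MvPolynomial.eval z (pderiv 1 p) * Complex.exp (2 * MvPolynomial.eval z p)
      = -(MvPolynomial.eval z (pderiv 0 p)) := by
    intro z
    have := heq z
    rwa [hfder, hfder] at this
  -- differentiate H1 in the direction of the first variable
  have H2 : ∀ z,
      (MvPolynomial.eval z (pderiv 1 p) •
          (Complex.exp (2 * MvPolynomial.eval z p) • ((2:ℂ) • Dmap p z)) +
        Complex.exp (2 * MvPolynomial.eval z p) • Dmap (pderiv 1 p) z)
      = -(Dmap (pderiv 0 p) z) := by
    intro z
    have hL : HasFDerivAt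
        (fun z => MvPolynomial.eval z (pderiv 1 p) *
          Complex.exp (2 * MvPolynomial.eval z p))
        (MvPolynomial.eval z (pderiv 1 p) •
            (Complex.exp (2 * MvPolynomial.eval z p) • ((2:ℂ) • Dmap p z)) +
          Complex.exp (2 * MvPolynomial.eval z p) • Dmap (pderiv 1 p) z) z :=
      (hasFDerivAt_eval (pderiv 1 p) z).mul
        (((hasFDerivAt_eval p z).const_mul 2).cexp)
    have hR : HasFDerivAt (fun z => -(MvPolynomial.eval z (pderiv 0 p)))
        (-(Dmap (pderiv 0 p) z)) z := (hasFDerivAt_eval (pderiv 0 p) z).neg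
    have hfe : (fun z => MvPolynomial.eval z (pderiv 1 p) *
        Complex.exp (2 * MvPolynomial.eval z p))
        = fun z => -(MvPolynomial.eval z (pderiv 0 p)) := funext H1
    rw [hfe] at hL
    exact hL.unique hR
  have H3 : ∀ z,
      2 * (MvPolynomial.eval z (pderiv 0 p))^2 * MvPolynomial.eval z (pderiv 1 p)
        + MvPolynomial.eval z (pderiv 0 p) * MvPolynomial.eval z (pderiv 0 (pderiv 1 p))
      = MvPolynomial.eval z (pderiv 0 (pderiv 0 p)) * MvPolynomial.eval z (pderiv 1 p) := by
    intro z
    have h2 := congrArg (fun L => L (Pi.single (0:Fin 2) 1)) (H2 z)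
    simp only [ContinuousLinearMap.add_apply, ContinuousLinearMap.smul_apply,
      ContinuousLinearMap.neg_apply, Dmap_single, smul_eq_mul] at h2
    have h1 := H1 z
    linear_combination
      (2 * MvPolynomial.eval z (pderiv 0 p) * MvPolynomial.eval z (pderiv 1 p)
        + MvPolynomial.eval z (pderiv 0 (pderiv 1 p))) * h1
      - MvPolynomial.eval z (pderiv 1 p) * h2
  have hb0 : ∀ z, MvPolynomial.eval z (pderiv 1 p) = 0 := by
    intro z
    by_contra hb
    have ha : MvPolynomial.eval z (pderiv 0 p) ≠ 0 := by
      intro h0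
      apply hb
      have h1 := H1 z
      rw [h0, neg_zero] at h1
      exact (mul_eq_zero.mp h1).resolve_right (Complex.exp_ne_zero _)
    set w := z 1 with hw
    have hzeq : (fun i : Fin 2 => if i = 0 then z 0 else w) = z := by
      funext i; fin_cases i <;> simp [hw]
    have hf0 : Phi w (pderiv 0 p) ≠ 0 := by
      intro h
      apply ha
      have := eval_Phi w (z 0) (pderiv 0 p)
      rw [h, hzeq] at this
      simpa using this.symm
    have hg0 : Phi w (pderiv 1 p) ≠ 0 := by
      intro h
      apply hb
      have := eval_Phi w (z 0) (pderiv 1 p)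
      rw [h, hzeq] at this
      simpa using this.symm
    refine keydeg (Phi w (pderiv 0 p)) (Phi w (pderiv 1 p)) hf0 hg0 ?_
    rw [deriv_Phi, deriv_Phi]
    apply Polynomial.funext
    intro s
    simp only [Polynomial.eval_add, Polynomial.eval_mul, Polynomial.eval_pow,
      Polynomial.eval_ofNat, eval_Phi]
    exact H3 _
  have ha0 : ∀ z, MvPolynomial.eval z (pderiv 0 p) = 0 := by
    intro z
    have h1 := H1 z
    rw [hb0 z, zero_mul] at h1
    simpa using h1.symm
  refine ⟨fun z => by rw [hfder]; exact hb0 z,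
    fun z => by rw [hfder]; exact ha0 z, ?_⟩
  have hdiff : Differentiable ℂ (fun z => MvPolynomial.eval z p) :=
    fun z => (hasFDerivAt_eval p z).differentiableAt
  have hfd0 : ∀ z, fderiv ℂ (fun z => MvPolynomial.eval z p) z = 0 := by
    intro z
    rw [fderiv_eval]
    ext v
    rw [Dmap_apply, ha0, hb0]
    simp
  exact ⟨MvPolynomial.eval 0 p,
    fun z => is_const_of_fderiv_eq_zero hdiff hfd0 z 0⟩
end

section
/- Let p : ℂ² → ℂ be a polynomial and φ, ψ : ℂ² → ℂ entire functions with φ nonconstant. If exp(n·φ)·ψ₁ = exp(p)·ψ₂ holds identically, where n ≥ 1 and ψ₁, ψ₂ are polynomials with ψ₁ not identically zero, then n·φ − p is constant (hence φ is a polynomial). -/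
open Complex

section Aux
open Polynomial

lemma aux_dense {D : ℂ[X]} (hD : D ≠ 0) : Dense {t : ℂ | D.eval t ≠ 0} := by
  have h : {t : ℂ | D.IsRoot t}.Finite := D.finite_setOf_isRoot hD
  have hd := (h.countable).dense_compl ℂ
  have : {t : ℂ | D.eval t ≠ 0} = {t : ℂ | D.IsRoot t}ᶜ := by
    ext t; simp [Polynomial.IsRoot]
  rwa [this]

lemma aux_divide {h : ℂ → ℂ} (hc : Continuous h) {Q R : ℂ[X]} (hQ : Q ≠ 0)
    (hdeg : R.degree < Q.degree) (heq : ∀ t, h t * Q.eval t = R.eval t) :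
    ∀ t, h t = 0 := by
  classical
  set D := GCDMonoid.gcd R Q with hDdef
  have hD : D ≠ 0 := gcd_ne_zero_of_right hQ
  set Q₁ := Q / D with hQ₁def
  set R₁ := R / D with hR₁def
  have hQfac : D * Q₁ = Q := EuclideanDomain.mul_div_cancel' hD (gcd_dvd_right R Q)
  have hRfac : D * R₁ = R := EuclideanDomain.mul_div_cancel' hD (gcd_dvd_left R Q)
  have hQ₁ : Q₁ ≠ 0 := by
    intro h0; apply hQ; rw [← hQfac, h0, mul_zero]
  have hcop : IsCoprime R₁ Q₁ := isCoprime_div_gcd_div_gcd hQ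
  have key : ∀ t, h t * Q₁.eval t = R₁.eval t := by
    have hext := Continuous.ext_on (aux_dense hD) (hc.mul Q₁.continuous) R₁.continuous ?_
    · exact fun t => congrFun hext t
    · intro t ht
      have h1 := heq t
      rw [← hQfac, ← hRfac] at h1
      simp only [Polynomial.eval_mul] at h1
      have ht' : D.eval t ≠ 0 := ht
      exact mul_left_cancel₀ ht' (by simp only [Pi.mul_apply]; ring_nf; ring_nf at h1; linear_combination h1)
  -- Q₁ has no roots
  have hnoroot : ∀ t : ℂ, Q₁.eval t ≠ 0 := by
    intro t h0
    obtain ⟨u, v, huv⟩ := hcop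
    have hR₁0 : R₁.eval t = 0 := by rw [← key t, h0, mul_zero]
    have := congrArg (Polynomial.eval t) huv
    simp [hR₁0, h0] at this
  -- Q₁ is a nonzero constant
  have hdegQ₁ : Q₁.degree ≤ 0 := by
    by_contra hgt
    push_neg at hgt
    obtain ⟨t, ht⟩ := Complex.exists_root hgt
    exact hnoroot t ht
  obtain ⟨c, hQc⟩ : ∃ c : ℂ, Q₁ = Polynomial.C c := ⟨Q₁.coeff 0, eq_C_of_degree_le_zero hdegQ₁⟩
  have hcne : c ≠ 0 := fun h0 => hQ₁ (by rw [hQc, h0, map_zero])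
  -- turn into a polynomial identity
  have hpoly : Polynomial.C c⁻¹ * R₁ * Q = R := by
    apply Polynomial.funext
    intro t
    have hk := key t
    rw [hQc] at hk
    simp only [Polynomial.eval_C] at hk
    simp only [Polynomial.eval_mul, Polynomial.eval_C]
    rw [← heq t, ← hk]
    field_simp
  have hR₁0 : R₁ = 0 := by
    by_contra hR₁ne
    have hne : Polynomial.C c⁻¹ * R₁ ≠ 0 := mul_ne_zero (by simp [hcne]) hR₁ne
    have : Q.degree ≤ R.degree := by
      rw [← hpoly, degree_mul]
      exact le_add_of_nonneg_left (zero_le_degree_iff.mpr hne)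
    exact absurd hdeg (not_lt.mpr this)
  intro t
  have hk := key t
  rw [hR₁0, hQc] at hk
  simp only [Polynomial.eval_C, Polynomial.eval_zero] at hk
  exact (mul_eq_zero.mp hk).resolve_right hcne

lemma aux_onevar {f : ℂ → ℂ} (hf : Differentiable ℂ f) {q₁ q₂ : ℂ[X]} (hq₁ : q₁ ≠ 0)
    (heq : ∀ t, Complex.exp (f t) * q₁.eval t = q₂.eval t) :
    ∀ t, f t = f 0 := by
  have hq₂ : q₂ ≠ 0 := by
    intro h0
    apply hq₁
    apply Polynomial.funext
    intro t
    have := heq t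
    rw [h0] at this
    simp only [Polynomial.eval_zero] at this
    have := (mul_eq_zero.mp this).resolve_left (Complex.exp_ne_zero _)
    simpa using this
  -- derivative identity
  have hderiv : ∀ t, deriv f t * (q₁ * q₂).eval t
      = (Polynomial.derivative q₂ * q₁ - Polynomial.derivative q₁ * q₂).eval t := by
    intro t
    have h1 : HasDerivAt (fun s => Complex.exp (f s) * q₁.eval s)
        ((Complex.exp (f t) * deriv f t) * q₁.eval t
          + Complex.exp (f t) * (Polynomial.derivative q₁).eval t) t :=
      ((hf t).hasDerivAt.cexp).mul (q₁.hasDerivAt t)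
    have h2 : (fun s => Complex.exp (f s) * q₁.eval s) = fun s => q₂.eval s := funext heq
    rw [h2] at h1
    have h3 := (q₂.hasDerivAt t).unique h1
    simp only [Polynomial.eval_mul, Polynomial.eval_sub]
    linear_combination Polynomial.eval t q₁ * h3.symm
      - (deriv f t * Polynomial.eval t q₁ + (Polynomial.derivative q₁).eval t) * heq t
  -- degree comparison
  have hdeg : (Polynomial.derivative q₂ * q₁ - Polynomial.derivative q₁ * q₂).degree
      < (q₁ * q₂).degree := by
    apply lt_of_le_of_lt (Polynomial.degree_sub_le _ _)
    rw [max_lt_iff]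
    constructor
    · rw [degree_mul, degree_mul, add_comm q₁.degree q₂.degree]
      exact WithBot.add_lt_add_right (degree_ne_bot.mpr hq₁) (q₂.degree_derivative_lt hq₂)
    · rw [degree_mul, degree_mul]
      exact WithBot.add_lt_add_right (degree_ne_bot.mpr hq₂) (q₁.degree_derivative_lt hq₁)
  have hcont : Continuous (deriv f) :=
    (hf.contDiff : ContDiff ℂ 1 f).continuous_deriv le_rfl
  have hzero := aux_divide hcont (mul_ne_zero hq₁ hq₂) hdeg hderiv
  intro t
  exact is_const_of_deriv_eq_zero hf hzero t 0

lemma aux_line (P : MvPolynomial (Fin 2) ℂ) (a b : Fin 2 → ℂ) :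
    ∃ q : ℂ[X], ∀ t : ℂ, q.eval t = MvPolynomial.eval (fun i => a i + t * b i) P := by
  refine ⟨MvPolynomial.aeval (fun i => Polynomial.C (a i) + Polynomial.C (b i) * Polynomial.X) P,
    fun t => ?_⟩
  induction P using MvPolynomial.induction_on with
  | C r => simp
  | add p q hp hq => simp [hp, hq]
  | mul_X p i hp =>
      simp only [map_mul, MvPolynomial.aeval_X, Polynomial.eval_mul, Polynomial.eval_add,
        Polynomial.eval_C, Polynomial.eval_X, MvPolynomial.eval_mul, MvPolynomial.eval_X, hp]
      ring

lemma aux_mvdiff (P : MvPolynomial (Fin 2) ℂ) :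
    Differentiable ℂ (fun z : Fin 2 → ℂ => MvPolynomial.eval z P) := by
  induction P using MvPolynomial.induction_on with
  | C r => simp only [MvPolynomial.eval_C]; exact differentiable_const r
  | add p q hp hq => simp only [map_add]; exact hp.add hq
  | mul_X p i hp =>
      simp only [MvPolynomial.eval_mul, MvPolynomial.eval_X]; exact
        hp.mul ((ContinuousLinearMap.proj i : (Fin 2 → ℂ) →L[ℂ] ℂ).differentiable)

end Aux

open Polynomial in
theorem stmt19 (n : ℕ) (hn : 1 ≤ n)
    (p ψ₁ ψ₂ : (Fin 2 → ℂ) → ℂ)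
    (hp : ∃ P : MvPolynomial (Fin 2) ℂ, ∀ z, p z = MvPolynomial.eval z P)
    (hψ₁ : ∃ P : MvPolynomial (Fin 2) ℂ, ∀ z, ψ₁ z = MvPolynomial.eval z P)
    (hψ₂ : ∃ P : MvPolynomial (Fin 2) ℂ, ∀ z, ψ₂ z = MvPolynomial.eval z P)
    (hψ₁ne : ¬ ∀ z, ψ₁ z = 0)
    (φ : (Fin 2 → ℂ) → ℂ) (hφ : Differentiable ℂ φ)
    (hφnc : ¬ ∃ c : ℂ, ∀ z, φ z = c)
    (heq : ∀ z, Complex.exp ((n : ℂ) * φ z) * ψ₁ z = Complex.exp (p z) * ψ₂ z) :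
    (∃ c : ℂ, ∀ z, (n : ℂ) * φ z - p z = c) ∧
    (∃ Q : MvPolynomial (Fin 2) ℂ, ∀ z, φ z = MvPolynomial.eval z Q) := by
  obtain ⟨P, hP⟩ := hp
  obtain ⟨P₁, hP₁⟩ := hψ₁
  obtain ⟨P₂, hP₂⟩ := hψ₂
  set g : (Fin 2 → ℂ) → ℂ := fun z => (n : ℂ) * φ z - p z with hgdef
  have hpd : Differentiable ℂ p := by
    have := aux_mvdiff P
    have h : p = fun z => MvPolynomial.eval z P := funext hP
    rwa [h]
  have hg : Differentiable ℂ g := ((hφ.const_mul _).sub hpd)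
  have hgq : ∀ z, Complex.exp (g z) * ψ₁ z = ψ₂ z := by
    intro z
    have h1 := heq z
    have h2 : Complex.exp (g z) = Complex.exp ((n : ℂ) * φ z) / Complex.exp (p z) := by
      rw [hgdef]; exact Complex.exp_sub _ _
    rw [h2, div_mul_eq_mul_div, div_eq_iff (Complex.exp_ne_zero _)]
    linear_combination h1
  push_neg at hψ₁ne
  obtain ⟨a, ha⟩ := hψ₁ne
  have hconst : ∀ z, g z = g a := by
    intro z
    obtain ⟨q₁, hq₁⟩ := aux_line P₁ a (fun i => z i - a i)
    obtain ⟨q₂, hq₂⟩ := aux_line P₂ a (fun i => z i - a i)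
    set L : ℂ → (Fin 2 → ℂ) := fun t i => a i + t * (z i - a i) with hLdef
    have hL : Differentiable ℂ L := by
      apply differentiable_pi.mpr
      intro i
      exact (differentiable_const _).add (differentiable_id.mul (differentiable_const _))
    have hq₁ne : q₁ ≠ 0 := by
      intro h0
      apply ha
      have := hq₁ 0
      rw [h0] at this
      simp only [Polynomial.eval_zero] at this
      have hL0 : (fun i => a i + (0:ℂ) * (z i - a i)) = a := by funext i; simp
      rw [hL0] at this
      rw [hP₁ a, ← this]
    have hfd : Differentiable ℂ (fun t => g (L t)) := hg.comp hL
    have hkey : ∀ t : ℂ, Complex.exp (g (L t)) * q₁.eval t = q₂.eval t := by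
      intro t
      rw [hq₁ t, hq₂ t, ← hP₁, ← hP₂]
      exact hgq (L t)
    have := aux_onevar hfd hq₁ne hkey 1
    have hL1 : L 1 = z := by funext i; simp [hLdef]
    have hL0 : L 0 = a := by funext i; simp [hLdef]
    rwa [hL1, hL0] at this
  refine ⟨⟨g a, hconst⟩, ?_⟩
  refine ⟨MvPolynomial.C ((n : ℂ)⁻¹) * (P + MvPolynomial.C (g a)), fun z => ?_⟩
  have hz := hconst z
  have hn0 : (n : ℂ) ≠ 0 := Nat.cast_ne_zero.mpr (by omega)
  simp only [MvPolynomial.eval_mul, MvPolynomial.eval_C, MvPolynomial.eval_add, ← hP]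
  field_simp
  linear_combination hz
end
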